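/- arXiv:2007.08503 — 4 statements merged into one kernel-verified Lean document; each statement's English description precedes it below -/
import Mathlib

section
/- Let n ≥ 2 and 1 ≤ m ≤ n−1 be integers, let V be an m-dimensional linear subspace of ℝⁿ, let α ∈ [0,∞), let X = X(V,α), and let E ⊆ ℝⁿ be nonempty. Then there exists a Lipschitz function f : V → V⊥ with Lipschitz constant at most α such that E ⊆ Graph(f) if and only if E ∩ X_x = ∅ for every x ∈ E. -/
open MeasureTheory Metric Set
open scoped ENNReal NNReal

noncomputable section

abbrev E (n : ℕ) := EuclideanSpace ℝ (Fin n)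

/-- The bad cone `X(V,α) = {x : dist(x,V) > α · dist(x,V^⊥)}`. -/
def badCone {n : ℕ} (V : Submodule ℝ (E n)) (α : ℝ) : Set (E n) :=
  {x | α * Metric.infDist x (Vᗮ : Set (E n)) < Metric.infDist x (V : Set (E n))}

/-- The translated bad cone `X_x = x + X(V,α)`. -/
def badConeAt {n : ℕ} (V : Submodule ℝ (E n)) (α : ℝ) (x : E n) : Set (E n) :=
  {y | y - x ∈ badCone V α}

/-- `f` has Lipschitz constant at most `α`. -/
def LipBound {n : ℕ} (V : Submodule ℝ (E n)) (α : ℝ) (f : V → Vᗮ) : Prop :=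
  ∀ v w : V, dist (f v) (f w) ≤ α * dist v w

/-- The graph of `f : V → V^⊥`, as a subset of `ℝⁿ`. -/
def graphOf {n : ℕ} (V : Submodule ℝ (E n)) (f : V → Vᗮ) : Set (E n) :=
  {x | ∃ v : V, x = (v : E n) + (f v : E n)}

/-- A half-open dyadic cube, described by generation `k` and corner coordinates `j`. -/
structure DyadicCube (n : ℕ) where
  k : ℤ
  j : Fin n → ℤ

namespace DyadicCube

/-- Side length `2^{-k}`. -/
def side {n : ℕ} (Q : DyadicCube n) : ℝ := 2 ^ (-Q.k)

/-- The cube as a subset of `ℝⁿ`. -/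
def toSet {n : ℕ} (Q : DyadicCube n) : Set (E n) :=
  {x | ∀ i, (Q.j i : ℝ) * Q.side ≤ x i ∧ x i < ((Q.j i : ℝ) + 1) * Q.side}

/-- The geometric center of the cube. -/
def center {n : ℕ} (Q : DyadicCube n) : E n :=
  (EuclideanSpace.equiv (Fin n) ℝ).symm fun i => ((Q.j i : ℝ) + 1 / 2) * Q.side

/-- The diameter `√n · side Q`. -/
def diam {n : ℕ} (Q : DyadicCube n) : ℝ := Real.sqrt n * Q.side

end DyadicCube

/-- The radius `r_{Q,X} = 81 √n max(α,1/α) side Q`. -/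
def coneRadius {n : ℕ} (α : ℝ) (Q : DyadicCube n) : ℝ :=
  81 * Real.sqrt n * max α α⁻¹ * Q.side

/-- The conical annulus `A_{Q,X} = X_Q ∩ B̄(x_Q,r_{Q,X}) \ U(x_Q,r_{Q,X}/3)`. -/
def conAnnulus {n : ℕ} (V : Submodule ℝ (E n)) (α : ℝ) (Q : DyadicCube n) : Set (E n) :=
  ((⋃ x ∈ Q.toSet, badConeAt V α x) ∩ closedBall Q.center (coneRadius α Q)) \
    ball Q.center (coneRadius α Q / 3)

/-- The discretized conical annulus `Δ*_{Q,X}`. -/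
def discAnnulus {n : ℕ} (V : Submodule ℝ (E n)) (α : ℝ) (Q : DyadicCube n) :
    Set (DyadicCube n) :=
  {R | R.side = Q.side ∧ (R.toSet ∩ conAnnulus V α Q).Nonempty}

/-- The conical defect `Defect(μ,Q,X)`. -/
def defect {n : ℕ} (μ : Measure (E n)) (V : Submodule ℝ (E n)) (α : ℝ)
    (Q : DyadicCube n) : ℝ≥0∞ :=
  if μ Q.toSet = 0 then 0
  else ∑' R : discAnnulus V α Q, μ (R : DyadicCube n).toSet / μ Q.toSet

/-- The conical Dini function `G_{μ,X}(x)`. -/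
def dini {n : ℕ} (μ : Measure (E n)) (V : Submodule ℝ (E n)) (α : ℝ) (x : E n) : ℝ≥0∞ :=
  ∑' Q : {Q : DyadicCube n // Q.side ≤ 1 ∧ x ∈ Q.toSet}, defect μ V α Q.1

/-- `gap(S,T) = inf {|s-t| : s ∈ S, t ∈ T}` (with value `∞` if either set is empty). -/
def gap {n : ℕ} (S T : Set (E n)) : ℝ≥0∞ :=
  ⨅ (s : S) (t : T), edist (s : E n) (t : E n)

/-- `excess(S,T) = sup_{s∈S} inf_{t∈T} |s-t|` (with `excess(∅,T) = 0`). -/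
def excess {n : ℕ} (S T : Set (E n)) : ℝ≥0∞ :=
  ⨆ s : S, ⨅ t : T, edist (s : E n) (t : E n)

/-- `S` is a tree of dyadic cubes with top cube `top`. -/
def IsDyadicTree {n : ℕ} (S : Set (DyadicCube n)) (top : DyadicCube n) : Prop :=
  top ∈ S ∧ (∀ Q ∈ S, Q.toSet ⊆ top.toSet) ∧
    ∀ Q ∈ S, ∀ P : DyadicCube n, Q.toSet ⊆ P.toSet → P.toSet ⊆ top.toSet → P ∈ S

/-- The set of leaves of a family `S` of dyadic cubes with top cube `top`:
the union over infinite branches of the intersections along the branch. -/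
def leavesOf {n : ℕ} (top : DyadicCube n) (S : Set (DyadicCube n)) : Set (E n) :=
  {x | ∃ β : ℕ → DyadicCube n, (∀ i, β i ∈ S) ∧ (∀ i, (β i).k = top.k + i) ∧
    (∀ i, (β (i + 1)).toSet ⊆ (β i).toSet) ∧ ∀ i, x ∈ (β i).toSet}

/-- `Γ` is an `m`-dimensional Lipschitz graph in `ℝⁿ`. -/
def IsLipGraph (n m : ℕ) (Γ : Set (E n)) : Prop :=
  ∃ (V : Submodule ℝ (E n)) (f : V → Vᗮ) (L : ℝ),
    Module.finrank ℝ V = m ∧ 0 ≤ L ∧ LipBound V L f ∧ Γ = graphOf V f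

/-- `μ` is carried by `m`-dimensional Lipschitz graphs. -/
def CarriedByGraphs (n m : ℕ) (μ : Measure (E n)) : Prop :=
  ∃ Γ : ℕ → Set (E n), (∀ i, IsLipGraph n m (Γ i)) ∧ μ (univ \ ⋃ i, Γ i) = 0

/-- `μ` is singular to `m`-dimensional Lipschitz graphs. -/
def SingularToGraphs (n m : ℕ) (μ : Measure (E n)) : Prop :=
  ∀ Γ : Set (E n), IsLipGraph n m Γ → μ Γ = 0


open scoped RealInnerProductSpace

lemma simplex_norm_identity {G : Type*} [NormedAddCommGroup G] [InnerProductSpace ℝ G]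
    {ι : Type*} [Fintype ι] (c : ι → ℝ) (hc : ∑ i, c i = 1) (x : ι → G) :
    ∑ i, c i * ‖x i‖ ^ 2 - ‖∑ i, c i • x i‖ ^ 2
      = (1 / 2) * ∑ i, ∑ j, c i * c j * ‖x i - x j‖ ^ 2 := by
  have hinner : ‖∑ i, c i • x i‖ ^ 2 = ∑ i, ∑ j, c i * c j * ⟪x i, x j⟫ := by
    rw [← real_inner_self_eq_norm_sq, sum_inner]
    refine Finset.sum_congr rfl fun i _ => ?_
    rw [real_inner_smul_left, inner_sum, Finset.mul_sum]
    refine Finset.sum_congr rfl fun j _ => ?_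
    rw [real_inner_smul_right]; ring
  have hexp : ∑ i, ∑ j, c i * c j * ‖x i - x j‖ ^ 2
      = ∑ i, ∑ j, (c i * c j * ‖x i‖ ^ 2 + c i * c j * ‖x j‖ ^ 2
          - 2 * (c i * c j * ⟪x i, x j⟫)) := by
    refine Finset.sum_congr rfl fun i _ => Finset.sum_congr rfl fun j _ => ?_
    rw [@norm_sub_sq_real]; ring
  have h1 : ∑ i, ∑ j, c i * c j * ‖x i‖ ^ 2 = ∑ i, c i * ‖x i‖ ^ 2 := by
    refine Finset.sum_congr rfl fun i _ => ?_
    have : ∑ j, c i * c j * ‖x i‖ ^ 2 = (c i * ‖x i‖ ^ 2) * ∑ j, c j := by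
      rw [Finset.mul_sum]; exact Finset.sum_congr rfl fun j _ => by ring
    rw [this, hc, mul_one]
  have h2 : ∑ i, ∑ j, c i * c j * ‖x j‖ ^ 2 = ∑ j, c j * ‖x j‖ ^ 2 := by
    rw [Finset.sum_comm]
    refine Finset.sum_congr rfl fun j _ => ?_
    have : ∑ i, c i * c j * ‖x j‖ ^ 2 = (c j * ‖x j‖ ^ 2) * ∑ i, c i := by
      rw [Finset.mul_sum]; exact Finset.sum_congr rfl fun i _ => by ring
    rw [this, hc, mul_one]
  have h3 : ∑ i, ∑ j, (c i * c j * ‖x i‖ ^ 2 + c i * c j * ‖x j‖ ^ 2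
          - 2 * (c i * c j * ⟪x i, x j⟫))
      = (∑ i, ∑ j, c i * c j * ‖x i‖ ^ 2) + (∑ i, ∑ j, c i * c j * ‖x j‖ ^ 2)
        - 2 * (∑ i, ∑ j, c i * c j * ⟪x i, x j⟫) := by
    rw [Finset.mul_sum, ← Finset.sum_add_distrib, ← Finset.sum_sub_distrib]
    refine Finset.sum_congr rfl fun i _ => ?_
    rw [Finset.mul_sum, ← Finset.sum_add_distrib, ← Finset.sum_sub_distrib]
  rw [hexp, h3, h1, h2, ← hinner]; ring

lemma kirszbraun_finite {F G : Type*} [NormedAddCommGroup F] [InnerProductSpace ℝ F]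
    [NormedAddCommGroup G] [InnerProductSpace ℝ G]
    {ι : Type*} [Fintype ι] [Nonempty ι] {α : ℝ} (hα : 0 ≤ α)
    (s : ι → F) (x : ι → G) (v : F)
    (h : ∀ i j, ‖x i - x j‖ ≤ α * ‖s i - s j‖) :
    ∃ y : G, ∀ i, ‖y - x i‖ ≤ α * ‖v - s i‖ := by
  classical
  set a : ι → ℝ := fun i => ‖x i‖ ^ 2 - α ^ 2 * ‖v - s i‖ ^ 2 with ha
  set ψ : (ι → ℝ) → ℝ := fun c => ∑ i, c i * a i - ‖∑ i, c i • x i‖ ^ 2 with hψdef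
  have hcont : Continuous ψ := by
    apply Continuous.sub
    · exact continuous_finset_sum _ fun i _ => (continuous_apply i).mul continuous_const
    · exact ((continuous_finset_sum _ fun i _ =>
        (continuous_apply i).smul continuous_const).norm.pow 2)
  have hsne : (stdSimplex ℝ ι).Nonempty := by
    refine ⟨fun _ => (Fintype.card ι : ℝ)⁻¹, fun i => by positivity, ?_⟩
    rw [Finset.sum_const, Finset.card_univ, nsmul_eq_mul, mul_inv_cancel₀]
    exact_mod_cast Fintype.card_ne_zero
  obtain ⟨c, hc, hcmax⟩ := (isCompact_stdSimplex ℝ ι).exists_isMaxOn hsne hcont.continuousOn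
  set y : G := ∑ i, c i • x i with hy
  -- Step A : ψ ≤ 0 on the simplex
  have stepA : ∀ c' ∈ stdSimplex ℝ ι, ψ c' ≤ 0 := by
    rintro c' ⟨hpos, hsum⟩
    have e1 := simplex_norm_identity c' hsum x
    have e2 := simplex_norm_identity c' hsum (fun i => v - s i)
    have hsum2 : ∑ i, ∑ j, c' i * c' j * ‖x i - x j‖ ^ 2
        ≤ α ^ 2 * ∑ i, ∑ j, c' i * c' j * ‖(v - s i) - (v - s j)‖ ^ 2 := by
      rw [Finset.mul_sum]
      refine Finset.sum_le_sum fun i _ => ?_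
      rw [Finset.mul_sum]
      refine Finset.sum_le_sum fun j _ => ?_
      have h1 : ‖(v - s i) - (v - s j)‖ = ‖s i - s j‖ := by
        rw [show (v - s i) - (v - s j) = s j - s i by abel, norm_sub_rev]
      have h2 : ‖x i - x j‖ ^ 2 ≤ α ^ 2 * ‖(v - s i) - (v - s j)‖ ^ 2 := by
        rw [h1, ← mul_pow]
        exact pow_le_pow_left₀ (norm_nonneg _) (h i j) 2
      have h3 : 0 ≤ c' i * c' j := mul_nonneg (hpos i) (hpos j)
      calc c' i * c' j * ‖x i - x j‖ ^ 2
          ≤ c' i * c' j * (α ^ 2 * ‖(v - s i) - (v - s j)‖ ^ 2) :=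
            mul_le_mul_of_nonneg_left h2 h3
        _ = α ^ 2 * (c' i * c' j * ‖(v - s i) - (v - s j)‖ ^ 2) := by ring
    have e2' : α ^ 2 * (∑ i, c' i * ‖v - s i‖ ^ 2) - α ^ 2 * ‖∑ i, c' i • (v - s i)‖ ^ 2
        = α ^ 2 * ((1 / 2) * ∑ i, ∑ j, c' i * c' j * ‖(v - s i) - (v - s j)‖ ^ 2) := by
      rw [← e2]; ring
    have hψc' : ψ c' = ∑ i, c' i * ‖x i‖ ^ 2 - α ^ 2 * ∑ i, c' i * ‖v - s i‖ ^ 2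
        - ‖∑ i, c' i • x i‖ ^ 2 := by
      simp only [hψdef]
      have : ∑ i, c' i * a i
          = ∑ i, (c' i * ‖x i‖ ^ 2 - α ^ 2 * (c' i * ‖v - s i‖ ^ 2)) := by
        refine Finset.sum_congr rfl fun i _ => ?_; rw [ha]; ring
      rw [this, Finset.sum_sub_distrib, ← Finset.mul_sum]
    have hT4 : 0 ≤ α ^ 2 * ‖∑ i, c' i • (v - s i)‖ ^ 2 := by positivity
    linarith [e1, e2', hsum2, hT4]
  have hψc : ψ c ≤ 0 := stepA c hc
  refine ⟨y, fun j => ?_⟩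
  -- Step B : optimality in direction of vertex j
  set d : ι → ℝ := fun i => (if i = j then (1 : ℝ) else 0) - c i with hd
  set S : G := ∑ i, d i • x i with hS
  set L : ℝ := ∑ i, d i * a i - 2 * ⟪y, S⟫ with hLdef
  have hmem : ∀ t ∈ Set.Icc (0 : ℝ) 1, (fun i => c i + t * d i) ∈ stdSimplex ℝ ι := by
    rintro t ⟨ht0, ht1⟩
    obtain ⟨hcpos, hcsum⟩ := hc
    constructor
    · intro i
      show 0 ≤ c i + t * d i
      have heq : c i + t * d i = (1 - t) * c i + t * (if i = j then (1 : ℝ) else 0) := by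
        rw [hd]; ring
      rw [heq]
      have h0 : (0:ℝ) ≤ (if i = j then (1 : ℝ) else 0) := by positivity
      have := mul_nonneg ht0 h0
      nlinarith [hcpos i]
    · have hite : ∑ i, (if i = j then (1 : ℝ) else 0) = 1 := by
        rw [Finset.sum_ite_eq' Finset.univ j (fun _ => (1:ℝ))]
        simp
      have hdsum : ∑ i, d i = 0 := by
        simp only [hd]
        rw [Finset.sum_sub_distrib, hite, hcsum, sub_self]
      show ∑ i, (c i + t * d i) = 1
      rw [Finset.sum_add_distrib, ← Finset.mul_sum, hdsum, hcsum, mul_zero, add_zero]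
  have hexpand : ∀ t : ℝ, ψ (fun i => c i + t * d i) = ψ c + t * L - t ^ 2 * ‖S‖ ^ 2 := by
    intro t
    have hsmul : ∑ i, (c i + t * d i) • x i = y + t • S := by
      rw [hy, hS, Finset.smul_sum, ← Finset.sum_add_distrib]
      refine Finset.sum_congr rfl fun i _ => ?_
      rw [add_smul, mul_smul]
    have hlin : ∑ i, (c i + t * d i) * a i = ∑ i, c i * a i + t * ∑ i, d i * a i := by
      rw [Finset.mul_sum, ← Finset.sum_add_distrib]
      refine Finset.sum_congr rfl fun i _ => by ring
    have hnorm : ‖y + t • S‖ ^ 2 = ‖y‖ ^ 2 + 2 * (t * ⟪y, S⟫) + t ^ 2 * ‖S‖ ^ 2 := by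
      rw [@norm_add_sq_real, real_inner_smul_right, norm_smul, Real.norm_eq_abs, mul_pow, sq_abs]
    rw [hψdef]
    simp only []
    rw [hsmul, hlin, hnorm, hLdef]
    ring
  have hL0 : L ≤ 0 := by
    by_contra hpos
    push_neg at hpos
    set B : ℝ := ‖S‖ ^ 2 with hB
    have hB0 : 0 ≤ B := by positivity
    set t : ℝ := min 1 (L / (2 * (B + 1))) with htdef
    have ht0 : 0 < t := lt_min one_pos (by positivity)
    have ht1 : t ≤ 1 := min_le_left _ _
    have hmax' : ψ (fun i => c i + t * d i) ≤ ψ c := hcmax (hmem t ⟨le_of_lt ht0, ht1⟩)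
    rw [hexpand t] at hmax'
    have h2 : L ≤ t * B := by
      have : t * L ≤ t * (t * B) := by nlinarith [hmax']
      exact le_of_mul_le_mul_left this ht0
    have h1 : t * (2 * (B + 1)) ≤ L := by
      have := min_le_right 1 (L / (2 * (B + 1)))
      calc t * (2 * (B + 1)) ≤ (L / (2 * (B + 1))) * (2 * (B + 1)) := by
            exact mul_le_mul_of_nonneg_right this (by positivity)
        _ = L := by field_simp
    nlinarith
  -- conclude
  have hd_a : ∑ i, d i * a i = a j - ∑ i, c i * a i := by
    have he : ∀ i ∈ Finset.univ, d i * a i = (if i = j then a i else 0) - c i * a i := by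
      intro i _
      rw [hd]; by_cases hij : i = j <;> simp [hij] <;> ring
    rw [Finset.sum_congr rfl he, Finset.sum_sub_distrib,
      Finset.sum_ite_eq' Finset.univ j a]
    simp
  have hd_S : S = x j - y := by
    have he : ∀ i ∈ Finset.univ, d i • x i = (if i = j then x i else 0) - c i • x i := by
      intro i _
      rw [hd]; by_cases hij : i = j <;> simp [hij, sub_smul]
    rw [hS, Finset.sum_congr rfl he, Finset.sum_sub_distrib,
      Finset.sum_ite_eq' Finset.univ j x]
    simp [hy]
  have hkey : ‖y - x j‖ ^ 2 ≤ α ^ 2 * ‖v - s j‖ ^ 2 := by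
    have h1 : ⟪y, S⟫ = ⟪y, x j⟫ - ‖y‖ ^ 2 := by
      rw [hd_S, inner_sub_right, real_inner_self_eq_norm_sq]
    have h2 : ‖y - x j‖ ^ 2 = ‖y‖ ^ 2 - 2 * ⟪y, x j⟫ + ‖x j‖ ^ 2 := by
      rw [@norm_sub_sq_real]
    have h3 : a j = ‖x j‖ ^ 2 - α ^ 2 * ‖v - s j‖ ^ 2 := by rw [ha]
    have h4 : ∑ i, c i * a i - ‖y‖ ^ 2 ≤ 0 := hψc
    have h5 : ∑ i, d i * a i - 2 * ⟪y, S⟫ ≤ 0 := hL0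
    linarith [h1, h2, h3, h4, h5, hd_a]
  have hkey' : ‖y - x j‖ ^ 2 ≤ (α * ‖v - s j‖) ^ 2 := by rw [mul_pow]; exact hkey
  have hfin := Real.sqrt_le_sqrt hkey'
  rwa [Real.sqrt_sq (norm_nonneg _), Real.sqrt_sq (by positivity)] at hfin

lemma kirszbraun_point {F G : Type*} [NormedAddCommGroup F] [InnerProductSpace ℝ F]
    [NormedAddCommGroup G] [InnerProductSpace ℝ G] [FiniteDimensional ℝ G]
    {α : ℝ} (hα : 0 ≤ α) {R : Set (F × G)} (hne : R.Nonempty)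
    (h : ∀ p ∈ R, ∀ q ∈ R, ‖p.2 - q.2‖ ≤ α * ‖p.1 - q.1‖) (v : F) :
    ∃ y : G, ∀ p ∈ R, ‖y - p.2‖ ≤ α * ‖v - p.1‖ := by
  classical
  obtain ⟨p₀, hp₀⟩ := hne
  set t : R → Set G := fun p => Metric.closedBall (p : F × G).2 (α * ‖v - (p : F × G).1‖) with ht
  have hcomp : IsCompact (t ⟨p₀, hp₀⟩) := isCompact_closedBall _ _
  have hclosed : ∀ p : R, IsClosed (t p) := fun p => Metric.isClosed_closedBall
  have hfin : ∀ u : Finset R, (t ⟨p₀, hp₀⟩ ∩ ⋂ p ∈ u, t p).Nonempty := by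
    intro u
    set q : Option { z // z ∈ u } → F × G :=
      fun o => o.elim p₀ (fun i => ((i : R) : F × G)) with hq
    have hqR : ∀ o, q o ∈ R := by
      rintro (_ | i)
      · exact hp₀
      · exact (i : R).2
    obtain ⟨y, hy⟩ := kirszbraun_finite hα (fun o => (q o).1) (fun o => (q o).2) v
      (fun i j => h _ (hqR i) _ (hqR j))
    refine ⟨y, ?_, ?_⟩
    · exact Metric.mem_closedBall.2 (by rw [dist_eq_norm]; exact hy none)
    · refine Set.mem_biInter fun p hp => ?_
      exact Metric.mem_closedBall.2 (by rw [dist_eq_norm]; exact hy (some ⟨p, hp⟩))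
  obtain ⟨y, _, hy⟩ := hcomp.inter_iInter_nonempty t hclosed hfin
  refine ⟨y, fun p hp => ?_⟩
  have := Set.mem_iInter.1 hy ⟨p, hp⟩
  rw [ht] at this
  simpa [dist_eq_norm] using Metric.mem_closedBall.1 this

lemma kirszbraun_extend {F G : Type*} [NormedAddCommGroup F] [InnerProductSpace ℝ F]
    [NormedAddCommGroup G] [InnerProductSpace ℝ G] [FiniteDimensional ℝ G]
    {α : ℝ} (hα : 0 ≤ α) {R₀ : Set (F × G)} (hne : R₀.Nonempty)
    (h : ∀ p ∈ R₀, ∀ q ∈ R₀, ‖p.2 - q.2‖ ≤ α * ‖p.1 - q.1‖) :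
    ∃ f : F → G, (∀ v w, ‖f v - f w‖ ≤ α * ‖v - w‖) ∧ ∀ p ∈ R₀, f p.1 = p.2 := by
  set S : Set (Set (F × G)) :=
    {R | R₀ ⊆ R ∧ ∀ p ∈ R, ∀ q ∈ R, ‖p.2 - q.2‖ ≤ α * ‖p.1 - q.1‖} with hSdef
  have hchain : ∀ c ⊆ S, IsChain (· ⊆ ·) c → c.Nonempty → ∃ ub ∈ S, ∀ s ∈ c, s ⊆ ub := by
    intro c hcS hchain ⟨s₀, hs₀⟩
    refine ⟨⋃₀ c, ⟨(hcS hs₀).1.trans (Set.subset_sUnion_of_mem hs₀), ?_⟩,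
      fun s hs => Set.subset_sUnion_of_mem hs⟩
    rintro p ⟨s, hsc, hps⟩ q ⟨u, huc, hqu⟩
    rcases hchain.total hsc huc with hsu | hus
    · exact (hcS huc).2 p (hsu hps) q hqu
    · exact (hcS hsc).2 p hps q (hus hqu)
  obtain ⟨M, hM₀, hMmem, hMmax⟩ :
      ∃ M, R₀ ⊆ M ∧ M ∈ S ∧ ∀ R' ∈ S, M ⊆ R' → R' ⊆ M := by
    obtain ⟨M, hM₀, hMmax⟩ := zorn_subset_nonempty S hchain R₀ ⟨Set.Subset.rfl, h⟩
    exact ⟨M, hM₀, hMmax.1, fun R' hR' hMR' => hMmax.2 hR' hMR'⟩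
  have htot : ∀ v : F, ∃ y, (v, y) ∈ M := by
    intro v
    by_contra hv
    push_neg at hv
    obtain ⟨y, hy⟩ := kirszbraun_point hα (hne.mono hM₀) hMmem.2 v
    have hins : insert (v, y) M ∈ S := by
      refine ⟨hM₀.trans (Set.subset_insert _ _), ?_⟩
      rintro p (rfl | hp) q (rfl | hq)
      · simp
      · exact hy q hq
      · rw [norm_sub_rev, norm_sub_rev (p.1)]
        exact hy p hp
      · exact hMmem.2 p hp q hq
    exact hv y (hMmax _ hins (Set.subset_insert _ _) (Set.mem_insert _ _))
  choose f hf using htot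
  have hfun : ∀ p ∈ M, f p.1 = p.2 := by
    intro p hp
    have := hMmem.2 (p.1, f p.1) (hf p.1) p hp
    simp only [sub_self, norm_zero, mul_zero] at this
    have : ‖f p.1 - p.2‖ ≤ 0 := this
    have := norm_le_zero_iff.1 this
    exact sub_eq_zero.1 this
  exact ⟨f, fun v w => hMmem.2 (v, f v) (hf v) (w, f w) (hf w),
    fun p hp => hfun p (hM₀ hp)⟩

section Glue

lemma infDist_submodule {n : ℕ} (K : Submodule ℝ (E n)) (z : E n) :
    Metric.infDist z (K : Set (E n)) = ‖z - (Submodule.orthogonalProjectionOnto K z : E n)‖ := by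
  rw [Metric.infDist_eq_iInf, ← Submodule.starProjection_apply, Submodule.starProjection_minimal]
  simp_rw [dist_eq_norm]
  rfl

end Glue


theorem statement0 {n m : ℕ} (hn : 2 ≤ n) (hm : 1 ≤ m) (hmn : m ≤ n - 1)
    (V : Submodule ℝ (E n)) (hV : Module.finrank ℝ V = m)
    (α : ℝ) (hα : 0 ≤ α) (A : Set (E n)) (hA : A.Nonempty) :
    (∃ f : V → Vᗮ, LipBound V α f ∧ A ⊆ graphOf V f) ↔
      ∀ x ∈ A, A ∩ badConeAt V α x = ∅ := by
  have hdec : ∀ z : E n,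
      (Submodule.orthogonalProjectionOnto V z : E n) + (Submodule.orthogonalProjectionOnto Vᗮ z : E n) = z :=
    fun z => Submodule.starProjection_add_starProjection_orthogonal (K := V) z
  have hinfV : ∀ z : E n,
      Metric.infDist z (V : Set (E n)) = ‖(Submodule.orthogonalProjectionOnto Vᗮ z : E n)‖ := by
    intro z
    rw [infDist_submodule]
    congr 1
    exact sub_eq_iff_eq_add'.2 (hdec z).symm
  have hinfV' : ∀ z : E n,
      Metric.infDist z (Vᗮ : Set (E n)) = ‖(Submodule.orthogonalProjectionOnto V z : E n)‖ := by
    intro z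
    rw [infDist_submodule]
    congr 1
    exact sub_eq_iff_eq_add.2 (hdec z).symm
  have hPv : ∀ w : V, Submodule.orthogonalProjectionOnto V (w : E n) = w :=
    fun w => Submodule.orthogonalProjectionOnto_mem_subspace_eq_self w
  have hPv' : ∀ u : Vᗮ, Submodule.orthogonalProjectionOnto V (u : E n) = 0 :=
    fun u => Submodule.orthogonalProjectionOnto_apply_of_mem_orthogonal u.2
  have hP'u : ∀ u : Vᗮ, Submodule.orthogonalProjectionOnto Vᗮ (u : E n) = u :=
    fun u => Submodule.orthogonalProjectionOnto_mem_subspace_eq_self u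
  have hP'v : ∀ w : V, Submodule.orthogonalProjectionOnto Vᗮ (w : E n) = 0 :=
    fun w => Submodule.orthogonalProjectionOnto_apply_of_mem_orthogonal
      (V.le_orthogonal_orthogonal w.2)
  constructor
  · rintro ⟨f, hf, hsub⟩ x hx
    rw [Set.eq_empty_iff_forall_notMem]
    rintro y ⟨hyA, hybad⟩
    obtain ⟨v, hv⟩ := hsub hx
    obtain ⟨w, hw⟩ := hsub hyA
    have hyx : y - x = (((w : E n) - v) + ((f w : E n) - f v)) := by
      rw [hv, hw]; abel
    have h1 : (Submodule.orthogonalProjectionOnto V (y - x) : E n) = (w : E n) - v := by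
      have : Submodule.orthogonalProjectionOnto V (y - x) = w - v := by
        rw [hyx, map_add, map_sub, map_sub, hPv w, hPv v, hPv' (f w), hPv' (f v)]
        abel
      rw [this, Submodule.coe_sub]
    have h2 : (Submodule.orthogonalProjectionOnto Vᗮ (y - x) : E n) = (f w : E n) - f v := by
      have : Submodule.orthogonalProjectionOnto Vᗮ (y - x) = f w - f v := by
        rw [hyx, map_add, map_sub, map_sub, hP'v w, hP'v v, hP'u (f w), hP'u (f v)]
        abel
      rw [this, Submodule.coe_sub]
    have hybad' : α * Metric.infDist (y - x) (Vᗮ : Set (E n))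
        < Metric.infDist (y - x) (V : Set (E n)) := hybad
    rw [hinfV, hinfV', h1, h2] at hybad'
    have hlip := hf w v
    rw [Subtype.dist_eq, Subtype.dist_eq, dist_eq_norm, dist_eq_norm] at hlip
    linarith
  · intro hcone
    have hpair : ∀ a ∈ A, ∀ b ∈ A,
        ‖(Submodule.orthogonalProjectionOnto Vᗮ (a - b) : E n)‖
          ≤ α * ‖(Submodule.orthogonalProjectionOnto V (a - b) : E n)‖ := by
      intro a ha b hb
      have hnot : a ∉ badConeAt V α b := by
        intro hbad
        have : a ∈ A ∩ badConeAt V α b := ⟨ha, hbad⟩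
        rw [hcone b hb] at this
        exact this
      have hle : ¬ (α * Metric.infDist (a - b) (Vᗮ : Set (E n))
          < Metric.infDist (a - b) (V : Set (E n))) := hnot
      push_neg at hle
      rwa [hinfV, hinfV'] at hle
    set R₀ : Set (V × Vᗮ) :=
      (fun a => (Submodule.orthogonalProjectionOnto V a, Submodule.orthogonalProjectionOnto Vᗮ a)) '' A with hR₀
    have hR₀ne : R₀.Nonempty := hA.image _
    have hR₀pair : ∀ p ∈ R₀, ∀ q ∈ R₀, ‖p.2 - q.2‖ ≤ α * ‖p.1 - q.1‖ := by
      rintro _ ⟨a, ha, rfl⟩ _ ⟨b, hb, rfl⟩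
      have e1 : (Submodule.orthogonalProjectionOnto Vᗮ a - Submodule.orthogonalProjectionOnto Vᗮ b : Vᗮ)
          = Submodule.orthogonalProjectionOnto Vᗮ (a - b) := by rw [map_sub]
      have e2 : (Submodule.orthogonalProjectionOnto V a - Submodule.orthogonalProjectionOnto V b : V)
          = Submodule.orthogonalProjectionOnto V (a - b) := by rw [map_sub]
      show ‖Submodule.orthogonalProjectionOnto Vᗮ a - Submodule.orthogonalProjectionOnto Vᗮ b‖
          ≤ α * ‖Submodule.orthogonalProjectionOnto V a - Submodule.orthogonalProjectionOnto V b‖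
      rw [e1, e2, Submodule.coe_norm, Submodule.coe_norm]
      exact hpair a ha b hb
    obtain ⟨f, hflip, hfext⟩ := kirszbraun_extend hα hR₀ne hR₀pair
    refine ⟨f, ?_, ?_⟩
    · intro v w
      rw [dist_eq_norm, dist_eq_norm]
      exact hflip v w
    · intro a ha
      have hmem : (Submodule.orthogonalProjectionOnto V a, Submodule.orthogonalProjectionOnto Vᗮ a) ∈ R₀ :=
        ⟨a, ha, rfl⟩
      have hfa := hfext _ hmem
      refine ⟨Submodule.orthogonalProjectionOnto V a, ?_⟩
      rw [hfa]
      exact (hdec a).symm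

end
end

section
/- Let 1 ≤ m ≤ n−1, let V be an m-dimensional linear subspace of ℝⁿ, let α ∈ (0,∞), and let X = X(V,α). For every dyadic cube Q in ℝⁿ, setting r = 81·√n·max(α,1/α)·side Q, the following holds: if R is a dyadic cube with side R = side Q such that R intersects X_Q ∩ B̄(x_Q, r) \ U(x_Q, r/3), then R ∩ B̄(x_Q, r/4) = ∅ and gap(R, ℝⁿ \ X_x(V,α/2)) ≥ diam Q for every x ∈ Q, where X_x(V,α/2) = x + X(V,α/2). -/
open MeasureTheory Metric Set
open scoped ENNReal NNReal

noncomputable section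

section Helpers

lemma sqx_infDist_eq_norm_sub_proj {n : ℕ} (K : Submodule ℝ (E n)) (x : E n) :
    Metric.infDist x (K : Set (E n)) = ‖x - (K.starProjection x : E n)‖ := by
  rw [Metric.infDist_eq_iInf, Submodule.starProjection_minimal]
  simp_rw [dist_eq_norm]
  rfl

lemma sqx_infDist_orth_eq {n : ℕ} (K : Submodule ℝ (E n)) (x : E n) :
    Metric.infDist x ((Kᗮ : Submodule ℝ (E n)) : Set (E n))
      = ‖(K.starProjection x : E n)‖ := by
  rw [sqx_infDist_eq_norm_sub_proj, Submodule.starProjection_orthogonal_val]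
  simp

lemma sqx_pyth {n : ℕ} (K : Submodule ℝ (E n)) (x : E n) :
    ‖x‖^2 = ‖(K.starProjection x : E n)‖^2
      + ‖x - (K.starProjection x : E n)‖^2 := by
  have := Submodule.norm_sq_eq_add_norm_sq_starProjection x K
  rwa [Submodule.starProjection_orthogonal_val] at this

lemma sqx_side_pos {n : ℕ} (Q : DyadicCube n) : 0 < Q.side := zpow_pos (by norm_num) _

lemma sqx_center_mem {n : ℕ} (Q : DyadicCube n) : Q.center ∈ Q.toSet := by
  intro i
  have hs := sqx_side_pos Q
  have hc : Q.center i = ((Q.j i : ℝ) + 1 / 2) * Q.side := rfl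
  rw [hc]
  constructor <;> nlinarith

lemma sqx_cube_dist_le {n : ℕ} (Q : DyadicCube n) {x y : E n}
    (hx : x ∈ Q.toSet) (hy : y ∈ Q.toSet) : dist x y ≤ Real.sqrt n * Q.side := by
  have hs := sqx_side_pos Q
  rw [EuclideanSpace.dist_eq]
  have hb : ∀ i, dist (x i) (y i) ^ 2 ≤ Q.side ^ 2 := by
    intro i
    have h1 := hx i; have h2 := hy i
    have hexp : ((Q.j i : ℝ) + 1) * Q.side = (Q.j i : ℝ) * Q.side + Q.side := by ring
    rw [Real.dist_eq, sq_abs]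
    apply sq_le_sq' <;> nlinarith [h1.1, h1.2, h2.1, h2.2]
  calc Real.sqrt (∑ i, dist (x i) (y i) ^ 2) ≤ Real.sqrt (∑ _i : Fin n, Q.side ^ 2) :=
        Real.sqrt_le_sqrt (Finset.sum_le_sum fun i _ => hb i)
    _ = Real.sqrt (n * Q.side ^ 2) := by
        rw [Finset.sum_const, Finset.card_univ, Fintype.card_fin, nsmul_eq_mul]
    _ = Real.sqrt n * Q.side := by
        rw [Real.sqrt_mul (Nat.cast_nonneg n), Real.sqrt_sq hs.le]

lemma sqx_le_of_sq_le_sq {x y : ℝ} (h : x^2 ≤ y^2) (hy : 0 ≤ y) : x ≤ y := by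
  by_contra hc
  push_neg at hc
  nlinarith

end Helpers


set_option maxHeartbeats 4000000 in
theorem statement1 {n m : ℕ} (hm : 1 ≤ m) (hmn : m ≤ n - 1)
    (V : Submodule ℝ (E n)) (hV : Module.finrank ℝ V = m)
    (α : ℝ) (hα : 0 < α) (Q R : DyadicCube n) (hside : R.side = Q.side)
    (hR : (R.toSet ∩ conAnnulus V α Q).Nonempty) :
    R.toSet ∩ closedBall Q.center (coneRadius α Q / 4) = ∅ ∧
      ∀ x ∈ Q.toSet,
        ENNReal.ofReal Q.diam ≤ gap R.toSet (badConeAt V (α / 2) x)ᶜ := by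
  classical
  obtain ⟨z, hzR, hzA⟩ := hR
  obtain ⟨⟨hzX, hzB⟩, hzNB⟩ := hzA
  simp only [Set.mem_iUnion] at hzX
  obtain ⟨x', hx'Q, hzx'⟩ := hzX
  have hcone : α * Metric.infDist (z - x') ((Vᗮ : Submodule ℝ (E n)) : Set (E n))
      < Metric.infDist (z - x') ((V : Submodule ℝ (E n)) : Set (E n)) := hzx'
  have hs : 0 < Q.side := sqx_side_pos Q
  set M : ℝ := max α α⁻¹ with hMdef
  have hM1 : (1:ℝ) ≤ M := by
    rcases le_total (1:ℝ) α with h | h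
    · exact le_max_of_le_left h
    · have hinv : (1:ℝ) ≤ α⁻¹ := by
        have := mul_inv_cancel₀ hα.ne'
        nlinarith [inv_nonneg.mpr hα.le]
      exact le_max_of_le_right hinv
  have hsq : (1:ℝ) ≤ Real.sqrt n := by
    rw [show (1:ℝ) = Real.sqrt 1 by simp]
    exact Real.sqrt_le_sqrt (by exact_mod_cast (by omega : 1 ≤ n))
  set A : ℝ := Real.sqrt n * Q.side with hAdef
  have hA : 0 < A := mul_pos (lt_of_lt_of_le one_pos hsq) hs
  have hr : coneRadius α Q = 81 * Real.sqrt n * M * Q.side := rfl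
  have hzB' : dist z Q.center ≤ 81 * Real.sqrt n * M * Q.side := by
    have := mem_closedBall.mp hzB; rwa [hr] at this
  have hzNB' : 81 * Real.sqrt n * M * Q.side / 3 ≤ dist z Q.center := by
    have h := fun h => hzNB (mem_ball.mpr h)
    rw [hr] at h
    exact le_of_not_gt h
  constructor
  · rw [Set.eq_empty_iff_forall_notMem]
    rintro y ⟨hyR, hyB⟩
    have h1 : dist z y ≤ A := by
      have := sqx_cube_dist_le R hzR hyR
      rwa [hside] at this
    have h2 : dist y Q.center ≤ 81 * Real.sqrt n * M * Q.side / 4 := by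
      have := mem_closedBall.mp hyB; rwa [hr] at this
    have htri := dist_triangle z y Q.center
    have hprod : A ≤ M * A := le_mul_of_one_le_left hA.le hM1
    nlinarith [hA, hprod]
  · intro x hxQ
    simp only [gap]
    refine le_iInf fun y => le_iInf fun w => ?_
    by_contra hcon
    push_neg at hcon
    rw [edist_dist] at hcon
    have hdiam : Q.diam = A := rfl
    have hdw : dist (y : E n) (w : E n) < A := by
      have hd : (0:ℝ) < Q.diam := by rw [hdiam]; exact hA
      have := (ENNReal.ofReal_lt_ofReal_iff hd).mp hcon
      rwa [hdiam] at this
    set u : E n := z - x' with hudef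
    have he : ‖((w : E n) - x) - u‖ ≤ 3 * A := by
      have h1 : dist (w : E n) (y : E n) ≤ A := by rw [dist_comm]; exact hdw.le
      have h2 : dist (y : E n) z ≤ A := by
        have := sqx_cube_dist_le R y.2 hzR
        rwa [hside] at this
      have h3 : dist x' x ≤ A := sqx_cube_dist_le Q hx'Q hxQ
      have hsplit : ((w : E n) - x) - u = ((w : E n) - y) + ((y : E n) - z) + (x' - x) := by
        rw [hudef]; abel
      rw [hsplit]
      calc ‖((w : E n) - y) + ((y : E n) - z) + (x' - x)‖
          ≤ ‖(w : E n) - y‖ + ‖(y : E n) - z‖ + ‖x' - x‖ := norm_add₃_le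
        _ ≤ A + A + A := by
            rw [← dist_eq_norm, ← dist_eq_norm, ← dist_eq_norm]
            exact add_le_add (add_le_add h1 h2) h3
        _ = 3 * A := by ring
    have hu : (27 * M - 1) * A ≤ ‖u‖ := by
      rw [hudef, ← dist_eq_norm]
      have hxc : dist x' Q.center ≤ A := sqx_cube_dist_le Q hx'Q (sqx_center_mem Q)
      have htri := dist_triangle z x' Q.center
      nlinarith [hzNB', htri, hxc]
    have hia : Metric.infDist u ((Vᗮ : Submodule ℝ (E n)) : Set (E n))
        = ‖(V.starProjection u : E n)‖ := sqx_infDist_orth_eq V u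
    have hib : Metric.infDist u ((V : Submodule ℝ (E n)) : Set (E n))
        = ‖u - (V.starProjection u : E n)‖ := sqx_infDist_eq_norm_sub_proj V u
    set a : ℝ := ‖(V.starProjection u : E n)‖ with hadef
    set b : ℝ := ‖u - (V.starProjection u : E n)‖ with hbdef
    have hab : α * a < b := by rw [← hia, ← hib]; exact hcone
    have ha0 : (0:ℝ) ≤ a := norm_nonneg _
    have hb0 : (0:ℝ) ≤ b := norm_nonneg _
    have hpyth : ‖u‖^2 = a^2 + b^2 := sqx_pyth V u
    set M0 : ℝ := max 1 α⁻¹ with hM0def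
    have hM01 : (1:ℝ) ≤ M0 := le_max_left _ _
    have hM0i : α⁻¹ ≤ M0 := le_max_right _ _
    have hM0M : M0 ≤ M := max_le hM1 (le_max_right _ _)
    have hαM0 : α * M0 ≤ M := by
      rcases le_total (1:ℝ) α⁻¹ with h | h
      · rw [hM0def, max_eq_right h, mul_inv_cancel₀ hα.ne']
        exact hM1
      · rw [hM0def, max_eq_left h, mul_one]
        exact le_max_left _ _
    have ha_le : a ≤ α⁻¹ * b := by
      have h := mul_le_mul_of_nonneg_left hab.le (inv_nonneg.mpr hα.le)
      rwa [← mul_assoc, inv_mul_cancel₀ hα.ne', one_mul] at h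
    have ha_le' : a ≤ M0 * b := ha_le.trans (mul_le_mul_of_nonneg_right hM0i hb0)
    have hb_le' : b ≤ M0 * b := le_mul_of_one_le_left hb0 hM01
    have husq : ‖u‖^2 ≤ 2 * (M0 * b)^2 := by
      nlinarith [mul_self_le_mul_self ha0 ha_le', mul_self_le_mul_self hb0 hb_le']
    have hscal : 18 * ((2 + α) * M0)^2 ≤ (27 * M - 1)^2 := by
      have hc : (2 + α) * M0 ≤ 3 * M := by nlinarith [hαM0, hM0M]
      have hc0 : (0:ℝ) ≤ (2 + α) * M0 := by positivity
      nlinarith [mul_le_mul hc hc hc0 (by linarith : (0:ℝ) ≤ 3 * M),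
        mul_nonneg (sub_nonneg.mpr hM1) (sub_nonneg.mpr hM1)]
    have hkey : (3 * (2 + α) * A)^2 ≤ b^2 := by
      have h27 : (0:ℝ) ≤ (27 * M - 1) * A := by nlinarith [hA.le]
      have h1 : ((27 * M - 1) * A)^2 ≤ ‖u‖^2 := by
        have := pow_le_pow_left₀ h27 hu 2
        simpa using this
      have h2 : (3 * (2 + α) * A)^2 * (2 * M0^2) ≤ ((27 * M - 1) * A)^2 := by
        nlinarith [mul_le_mul_of_nonneg_right hscal (sq_nonneg A)]
      have h3 : ‖u‖^2 ≤ b^2 * (2 * M0^2) := by nlinarith [husq]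
      have hpos : (0:ℝ) < 2 * M0^2 := by positivity
      exact le_of_mul_le_mul_right (h2.trans (h1.trans h3)) hpos
    have hbound : 3 * (2 + α) * A ≤ b := sqx_le_of_sq_le_sq hkey hb0
    have hmem : (w : E n) ∈ badConeAt V (α / 2) x := by
      show α / 2 * Metric.infDist ((w : E n) - x) ((Vᗮ : Submodule ℝ (E n)) : Set (E n))
        < Metric.infDist ((w : E n) - x) ((V : Submodule ℝ (E n)) : Set (E n))
      have h5 : b ≤ Metric.infDist ((w : E n) - x) ((V : Submodule ℝ (E n)) : Set (E n))
          + ‖((w : E n) - x) - u‖ := by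
        rw [← hib]
        calc Metric.infDist u ((V : Submodule ℝ (E n)) : Set (E n))
            ≤ Metric.infDist ((w : E n) - x) ((V : Submodule ℝ (E n)) : Set (E n))
              + dist u ((w : E n) - x) := Metric.infDist_le_infDist_add_dist
          _ = _ := by rw [dist_eq_norm']
      have h6 : Metric.infDist ((w : E n) - x) ((Vᗮ : Submodule ℝ (E n)) : Set (E n))
          ≤ a + ‖((w : E n) - x) - u‖ := by
        rw [← hia]
        calc Metric.infDist ((w : E n) - x) ((Vᗮ : Submodule ℝ (E n)) : Set (E n))
            ≤ Metric.infDist u ((Vᗮ : Submodule ℝ (E n)) : Set (E n))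
              + dist ((w : E n) - x) u := Metric.infDist_le_infDist_add_dist
          _ = _ := by rw [dist_eq_norm]
      have hee0 : (0:ℝ) ≤ ‖((w : E n) - x) - u‖ := norm_nonneg _
      set ee : ℝ := ‖((w : E n) - x) - u‖ with heedef
      have hαe : α * ee ≤ α * (3 * A) := mul_le_mul_of_nonneg_left he hα.le
      have step1 : α / 2 * Metric.infDist ((w : E n) - x) ((Vᗮ : Submodule ℝ (E n)) : Set (E n))
          ≤ α / 2 * (a + ee) := mul_le_mul_of_nonneg_left h6 (by positivity)
      have step2 : α / 2 * (a + ee) < b - ee := by nlinarith [hab, hαe, he, hbound]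
      have step3 : b - ee ≤ Metric.infDist ((w : E n) - x)
          ((V : Submodule ℝ (E n)) : Set (E n)) := by linarith [h5]
      linarith
    exact w.2 hmem

end
end

section
/- Let 1 ≤ m ≤ n−1, let V be an m-dimensional linear subspace of ℝⁿ, let α ∈ (0,∞), and let X = X(V,α). For every dyadic cube Q in ℝⁿ and every x ∈ Q, setting s_{Q,X} = r_{Q,X} − √n·side Q where r_{Q,X} = 81·√n·max(α,1/α)·side Q, one has X_x ∩ B̄(x, s_{Q,X}) \ U(x, s_{Q,X}/2) ⊆ A_{Q,X}. -/
open MeasureTheory Metric Set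
open scoped ENNReal NNReal

noncomputable section

lemma dist_center_le {n : ℕ} (Q : DyadicCube n) (x : E n) (hx : x ∈ Q.toSet) :
    dist x Q.center ≤ Real.sqrt n * Q.side / 2 := by
  have hside : (0:ℝ) < Q.side := by
    unfold DyadicCube.side; positivity
  rw [EuclideanSpace.dist_eq]
  have hcoord : ∀ i, dist (x i) (Q.center i) ^ 2 ≤ (Q.side / 2) ^ 2 := by
    intro i
    have h := hx i
    have hc : Q.center i = ((Q.j i : ℝ) + 1 / 2) * Q.side := rfl
    rw [hc, Real.dist_eq, sq_abs]
    have h1 : -(Q.side / 2) ≤ x i - ((Q.j i : ℝ) + 1 / 2) * Q.side := by nlinarith [h.1]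
    have h2 : x i - ((Q.j i : ℝ) + 1 / 2) * Q.side ≤ Q.side / 2 := by nlinarith [h.2]
    nlinarith
  have hsum : ∑ i, dist (x i) (Q.center i) ^ 2 ≤ n * (Q.side / 2) ^ 2 := by
    calc ∑ i, dist (x i) (Q.center i) ^ 2 ≤ ∑ _i : Fin n, (Q.side / 2) ^ 2 :=
          Finset.sum_le_sum fun i _ => hcoord i
      _ = n * (Q.side / 2) ^ 2 := by simp [Finset.sum_const]
  calc Real.sqrt (∑ i, dist (x i) (Q.center i) ^ 2) ≤ Real.sqrt (n * (Q.side / 2) ^ 2) :=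
        Real.sqrt_le_sqrt hsum
    _ = Real.sqrt n * (Q.side / 2) := by
        rw [Real.sqrt_mul (by positivity), Real.sqrt_sq (by positivity)]
    _ = Real.sqrt n * Q.side / 2 := by ring

theorem statement2 {n m : ℕ} (hm : 1 ≤ m) (hmn : m ≤ n - 1)
    (V : Submodule ℝ (E n)) (hV : Module.finrank ℝ V = m)
    (α : ℝ) (hα : 0 < α) (Q : DyadicCube n) (x : E n) (hx : x ∈ Q.toSet) :
    (badConeAt V α x ∩
        closedBall x (coneRadius α Q - Real.sqrt n * Q.side)) \
        ball x ((coneRadius α Q - Real.sqrt n * Q.side) / 2)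
      ⊆ conAnnulus V α Q := by
  intro y hy
  obtain ⟨⟨hcone, hball⟩, hnot⟩ := hy
  have hn : 1 ≤ n := by omega
  have hside : (0:ℝ) < Q.side := by unfold DyadicCube.side; positivity
  have hsqrt : (1:ℝ) ≤ Real.sqrt n := by
    rw [show (1:ℝ) = Real.sqrt 1 by simp]
    exact Real.sqrt_le_sqrt (by exact_mod_cast hn)
  have hM : (1:ℝ) ≤ max α α⁻¹ := by
    rcases le_total α 1 with h | h
    · exact le_max_of_le_right (one_le_inv_iff₀.mpr ⟨hα, h⟩)
    · exact le_max_of_le_left h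
  have hr : coneRadius α Q = 81 * Real.sqrt n * max α α⁻¹ * Q.side := rfl
  set s := coneRadius α Q - Real.sqrt n * Q.side with hs
  have hdc : dist x Q.center ≤ Real.sqrt n * Q.side / 2 := dist_center_le Q x hx
  have hd1 : dist y x ≤ s := mem_closedBall.mp hball
  have hd2 : s / 2 ≤ dist y x := by
    by_contra h
    exact hnot (mem_ball.mpr (lt_of_not_ge h))
  constructor
  · constructor
    · exact Set.mem_biUnion hx hcone
    · rw [mem_closedBall]
      calc dist y Q.center ≤ dist y x + dist x Q.center := dist_triangle _ _ _
        _ ≤ s + Real.sqrt n * Q.side / 2 := add_le_add hd1 hdc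
        _ ≤ coneRadius α Q := by rw [hr] at hs ⊢; nlinarith
  · intro hmem
    rw [mem_ball] at hmem
    have : dist y x ≤ dist y Q.center + dist Q.center x := dist_triangle _ _ _
    rw [dist_comm Q.center x] at this
    rw [hr] at hs hmem
    have hp : 0 < Real.sqrt n * Q.side := by positivity
    nlinarith [hd2, hdc, hmem, this, mul_le_mul_of_nonneg_left hM hp.le]

end
end

section
/- Let 1 ≤ m ≤ n−1 be integers and let μ be a Radon measure on ℝⁿ. Then there exists a unique pair of Radon measures (μ_G, μ_G⊥) such that μ = μ_G + μ_G⊥, μ_G is carried by m-dimensional Lipschitz graphs, and μ_G⊥ is singular to m-dimensional Lipschitz graphs. -/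
open MeasureTheory Metric Set
open scoped ENNReal NNReal

noncomputable section

/-- Lipschitz graphs are closed. -/
lemma isClosed_of_isLipGraph {n m : ℕ} {Γ : Set (E n)} (h : IsLipGraph n m Γ) :
    IsClosed Γ := by
  obtain ⟨V, f, L, _, hL, hf, rfl⟩ := h
  set g : V → E n := fun v => (v : E n) + (f v : E n) with hg
  have hrange : graphOf V f = Set.range g := by
    ext x
    simp only [graphOf, Set.mem_setOf_eq, Set.mem_range, hg, eq_comm]
  rw [hrange]
  have hanti : AntilipschitzWith 1 g := by
    refine AntilipschitzWith.of_le_mul_dist fun v w => ?_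
    rw [NNReal.coe_one, one_mul]
    have hvw : ((v : E n) - w) ∈ V := sub_mem v.2 w.2
    have hfvw : ((f v : E n) - f w) ∈ Vᗮ := sub_mem (f v).2 (f w).2
    have hinner : inner ℝ ((v : E n) - w) ((f v : E n) - f w) = (0 : ℝ) :=
      Submodule.inner_right_of_mem_orthogonal hvw hfvw
    have hpyth : ‖((v : E n) - w) + ((f v : E n) - f w)‖ ^ 2
        = ‖(v : E n) - w‖ ^ 2 + ‖(f v : E n) - f w‖ ^ 2 := by
      rw [norm_add_sq_real, hinner]; ring
    have hdg : dist (g v) (g w) = ‖((v : E n) - w) + ((f v : E n) - f w)‖ := by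
      rw [dist_eq_norm]
      have hsubeq : g v - g w = ((v : E n) - w) + ((f v : E n) - f w) := by
        simp only [hg]; abel
      rw [hsubeq]
    have hdv : dist v w = ‖(v : E n) - w‖ := by
      rw [Subtype.dist_eq, dist_eq_norm]
    rw [hdg, hdv]
    have h2 : ‖(v : E n) - w‖ ^ 2 ≤ ‖((v : E n) - w) + ((f v : E n) - f w)‖ ^ 2 := by
      rw [hpyth]; nlinarith [sq_nonneg ‖(f v : E n) - f w‖]
    have := Real.sqrt_le_sqrt h2
    rwa [Real.sqrt_sq (norm_nonneg _), Real.sqrt_sq (norm_nonneg _)] at this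
  have huc : UniformContinuous g := by
    have hlip : LipschitzWith ⟨1 + L, by positivity⟩ g := by
      refine LipschitzWith.of_dist_le_mul fun v w => ?_
      have h1 : dist (g v) (g w) ≤ dist (v : E n) (w : E n)
          + dist ((f v : E n)) ((f w : E n)) := by
        simpa [hg] using dist_add_add_le (v : E n) (f v : E n) (w : E n) (f w : E n)
      have h2 : dist ((f v : E n)) ((f w : E n)) ≤ L * dist v w := by
        have := hf v w
        rwa [Subtype.dist_eq (f v) (f w)] at this
      have h3 : dist (v : E n) (w : E n) = dist v w := (Subtype.dist_eq v w).symm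
      show dist (g v) (g w) ≤ (1 + L) * dist v w
      nlinarith [dist_nonneg (x := v) (y := w)]
    exact hlip.uniformContinuous
  exact hanti.isClosed_range huc

/-- A measure singular to graphs vanishes on countable unions of graphs. -/
lemma singular_iUnion {n m : ℕ} {ρ : Measure (E n)} (hρ : SingularToGraphs n m ρ)
    {Γ : ℕ → Set (E n)} (hΓ : ∀ i, IsLipGraph n m (Γ i)) : ρ (⋃ i, Γ i) = 0 :=
  le_antisymm (le_trans (measure_iUnion_le _) (by simp [fun i => hρ _ (hΓ i)])) zero_le

/-- Characterization of the decomposition as restrictions. -/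
lemma decomp_eq_restrict {n : ℕ} {μ p₁ p₂ : Measure (E n)} (hsum : μ = p₁ + p₂)
    {B : Set (E n)} (hB : MeasurableSet B) (h1 : p₁ Bᶜ = 0) (h2 : p₂ B = 0) :
    p₁ = μ.restrict B ∧ p₂ = μ.restrict Bᶜ := by
  constructor
  · ext s hs
    rw [Measure.restrict_apply hs, hsum, Measure.add_apply]
    have hp2 : p₂ (s ∩ B) = 0 :=
      le_antisymm (le_trans (measure_mono Set.inter_subset_right) h2.le) zero_le
    have hp1 : p₁ (s ∩ B) = p₁ s := by
      have hd : p₁ (s \ B) = 0 :=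
        le_antisymm (le_trans (measure_mono (Set.diff_subset_compl s B)) h1.le) zero_le
      have := measure_inter_add_diff (μ := p₁) s hB
      rw [hd, add_zero] at this
      exact this
    rw [hp2, add_zero, hp1]
  · ext s hs
    rw [Measure.restrict_apply hs, hsum, Measure.add_apply]
    have hp1 : p₁ (s ∩ Bᶜ) = 0 :=
      le_antisymm (le_trans (measure_mono Set.inter_subset_right) h1.le) zero_le
    have hp2 : p₂ (s ∩ Bᶜ) = p₂ s := by
      have hd : p₂ (s \ Bᶜ) = 0 := by
        refine le_antisymm (le_trans (measure_mono ?_) h2.le) zero_le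
        intro x hx
        simpa using hx.2
      have := measure_inter_add_diff (μ := p₂) s hB.compl
      rw [hd, add_zero] at this
      exact this
    rw [hp1, zero_add, hp2]

/-- There exists at least one `m`-dimensional Lipschitz graph (for `m ≤ n`). -/
lemma exists_lipGraph {n m : ℕ} (hmn : m ≤ n) : ∃ Γ : Set (E n), IsLipGraph n m Γ := by
  classical
  set b : Module.Basis (Fin n) ℝ (E n) := PiLp.basisFun 2 ℝ (Fin n) with hb
  have hli : LinearIndependent ℝ (b ∘ Fin.castLE hmn) :=
    b.linearIndependent.comp _ (Fin.castLE_injective hmn)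
  set V : Submodule ℝ (E n) := Submodule.span ℝ (Set.range (b ∘ Fin.castLE hmn)) with hV
  have hfin : Module.finrank ℝ V = m := by
    rw [hV, finrank_span_eq_card hli, Fintype.card_fin]
  exact ⟨graphOf V (fun _ => 0), V, (fun _ => 0), 0, hfin, le_refl 0,
    fun v w => by simp, rfl⟩

theorem statement12 {n m : ℕ} (hm : 1 ≤ m) (hmn : m ≤ n - 1)
    (μ : Measure (E n)) [IsLocallyFiniteMeasure μ] :
    ∃! p : Measure (E n) × Measure (E n),
      μ = p.1 + p.2 ∧ IsLocallyFiniteMeasure p.1 ∧ IsLocallyFiniteMeasure p.2 ∧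
        CarriedByGraphs n m p.1 ∧ SingularToGraphs n m p.2 := by
  classical
  -- an equivalent finite measure
  obtain ⟨ν, hνfin, hμν, hνμ⟩ := exists_isFiniteMeasure_absolutelyContinuous μ
  -- the collection of values of ν on countable unions of graphs
  set S : Set ℝ≥0∞ :=
    (fun Γ : ℕ → Set (E n) => ν (⋃ i, Γ i)) ''
      {Γ | ∀ i, IsLipGraph n m (Γ i)} with hS
  have hmn' : m ≤ n := hmn.trans (Nat.sub_le n 1)
  obtain ⟨Γ₀, hΓ₀⟩ := exists_lipGraph (n := n) (m := m) hmn'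
  have hSne : S.Nonempty := ⟨ν (⋃ _ : ℕ, Γ₀), ⟨fun _ => Γ₀, fun _ => hΓ₀, rfl⟩⟩
  obtain ⟨u, -, hu_tendsto, hu_mem⟩ := exists_seq_tendsto_sSup hSne (OrderTop.bddAbove S)
  choose Γfam hΓfam hνfam using hu_mem
  set Γall : ℕ → Set (E n) := fun j => Γfam (Nat.unpair j).1 (Nat.unpair j).2 with hΓall
  have hΓallG : ∀ j, IsLipGraph n m (Γall j) := fun j => hΓfam _ _
  set A : Set (E n) := ⋃ j, Γall j with hA
  have hAunion : ∀ k, (⋃ i, Γfam k i) ⊆ A := by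
    intro k x hx
    obtain ⟨i, hi⟩ := Set.mem_iUnion.1 hx
    exact Set.mem_iUnion.2 ⟨Nat.pair k i, by simpa [hΓall, Nat.unpair_pair] using hi⟩
  have hAmeas : MeasurableSet A :=
    MeasurableSet.iUnion fun j => (isClosed_of_isLipGraph (hΓallG j)).measurableSet
  have hνA_le : ν A ≤ sSup S := le_sSup ⟨Γall, hΓallG, rfl⟩
  have hνA_ge : sSup S ≤ ν A := by
    refine le_of_tendsto hu_tendsto (Filter.Eventually.of_forall fun k => ?_)
    rw [← hνfam k]
    exact measure_mono (hAunion k)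
  have hνA : ν A = sSup S := le_antisymm hνA_le hνA_ge
  -- key: every графh is ν-almost (hence μ-almost) contained in A
  have key : ∀ Γ : Set (E n), IsLipGraph n m Γ → μ (Γ \ A) = 0 := by
    intro Γ hΓ
    have hΓmeas : MeasurableSet (Γ \ A) :=
      (isClosed_of_isLipGraph hΓ).measurableSet.diff hAmeas
    have hνzero : ν (Γ \ A) = 0 := by
      by_contra hne
      set Γ' : ℕ → Set (E n) := fun j => if j = 0 then Γ else Γall (j - 1) with hΓ'
      have hΓ'G : ∀ j, IsLipGraph n m (Γ' j) := by
        intro j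
        by_cases hj : j = 0 <;> simp [hΓ', hj, hΓ, hΓallG]
      have hsub : A ∪ Γ ⊆ ⋃ j, Γ' j := by
        rintro x (hx | hx)
        · obtain ⟨j, hj⟩ := Set.mem_iUnion.1 hx
          exact Set.mem_iUnion.2 ⟨j + 1, by simpa [hΓ'] using hj⟩
        · exact Set.mem_iUnion.2 ⟨0, by simpa [hΓ'] using hx⟩
      have hle : ν (A ∪ Γ) ≤ sSup S :=
        le_trans (measure_mono hsub) (le_sSup ⟨Γ', hΓ'G, rfl⟩)
      have hdisj : Disjoint A (Γ \ A) := Set.disjoint_sdiff_right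
      have heq : ν A + ν (Γ \ A) = ν (A ∪ (Γ \ A)) := (measure_union hdisj hΓmeas).symm
      have hsub2 : A ∪ (Γ \ A) ⊆ A ∪ Γ := Set.union_subset_union_right A Set.diff_subset
      have hlead : ν A + ν (Γ \ A) ≤ ν A := by
        rw [heq]
        exact le_trans (measure_mono hsub2) (le_trans hle hνA.ge)
      have hfinA : ν A ≠ ∞ := measure_ne_top ν A
      have hz : ν A + ν (Γ \ A) ≤ ν A + 0 := by simpa using hlead
      have := ENNReal.le_of_add_le_add_left hfinA hz
      simp only [nonpos_iff_eq_zero] at this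
      exact hne this
    exact hμν hνzero
  -- the decomposition
  refine ⟨(μ.restrict A, μ.restrict Aᶜ), ⟨?_, ?_, ?_, ?_, ?_⟩, ?_⟩
  · exact (Measure.restrict_add_restrict_compl hAmeas).symm
  · exact Measure.isLocallyFiniteMeasure_of_le Measure.restrict_le_self
  · exact Measure.isLocallyFiniteMeasure_of_le Measure.restrict_le_self
  · refine ⟨Γall, hΓallG, ?_⟩
    rw [← Set.compl_eq_univ_diff, ← hA, Measure.restrict_apply hAmeas.compl]
    simp
  · intro Γ hΓ
    rw [Measure.restrict_apply' hAmeas.compl, ← Set.diff_eq]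
    exact key Γ hΓ
  -- uniqueness
  · rintro ⟨p₁, p₂⟩ ⟨hsum, -, -, ⟨Γp, hΓpG, hΓpnull⟩, hp₂⟩
    set B : Set (E n) := ⋃ i, Γp i with hB
    have hBmeas : MeasurableSet B :=
      MeasurableSet.iUnion fun j => (isClosed_of_isLipGraph (hΓpG j)).measurableSet
    have h1 : p₁ Bᶜ = 0 := by rwa [Set.compl_eq_univ_diff]
    have h2 : p₂ B = 0 := singular_iUnion hp₂ hΓpG
    obtain ⟨hp₁eq, hp₂eq⟩ := decomp_eq_restrict hsum hBmeas h1 h2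
    -- B and A agree μ-a.e.
    have hBA : μ (B \ A) = 0 := by
      have hsub : B \ A ⊆ ⋃ i, (Γp i \ A) := by
        rintro x ⟨hx, hxA⟩
        obtain ⟨i, hi⟩ := Set.mem_iUnion.1 hx
        exact Set.mem_iUnion.2 ⟨i, hi, hxA⟩
      refine le_antisymm (le_trans (measure_mono hsub) ?_) zero_le
      refine le_trans (measure_iUnion_le _) ?_
      simp [fun i => key _ (hΓpG i)]
    have hAB : μ (A \ B) = 0 := by
      rw [hsum, Measure.add_apply]
      have hp1 : p₁ (A \ B) = 0 :=
        le_antisymm (le_trans (measure_mono (Set.diff_subset_compl A B)) h1.le) zero_le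
      have hp2 : p₂ (A \ B) = 0 := by
        have hA0 : p₂ A = 0 := singular_iUnion hp₂ hΓallG
        exact le_antisymm (le_trans (measure_mono Set.diff_subset) hA0.le) zero_le
      rw [hp1, hp2, add_zero]
    have haeq : B =ᵐ[μ] A := (MeasureTheory.ae_eq_set).2 ⟨hBA, hAB⟩
    have hrestr : μ.restrict B = μ.restrict A := Measure.restrict_congr_set haeq
    have hrestrc : μ.restrict Bᶜ = μ.restrict Aᶜ := Measure.restrict_congr_set haeq.compl
    exact Prod.ext (by rw [hp₁eq, hrestr]) (by rw [hp₂eq, hrestrc])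

end
end
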